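/- Let ι be a nonempty finite index type and for each i ∈ ι let (S i, A i, P i, J i, γ) be a finite MDP with common discount factor γ ∈ [0,1); let V_i* : S i → ℝ be the unique fixed point of the Bellman optimality operator T_i of the i-th sub-MDP, and let V* : (∏ i, S i) → ℝ be the unique fixed point of the Bellman optimality operator T of the product MDP. Then V*(s) = ∑_{i ∈ ι} V_i*(s i) for all s ∈ ∏ i, S i; that is, the optimal value function of the product MDP is the sum of the optimal value functions of the sub-MDPs. -/
import Mathlib

open Finset

/-- If `f ≤ g + M` pointwise on a nonempty finite set, then `inf' f ≤ inf' g + M`. -/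
lemma my_inf'_le_inf'_add {α : Type*} (s : Finset α) (hs : s.Nonempty)
    (f g : α → ℝ) (M : ℝ) (h : ∀ a ∈ s, f a ≤ g a + M) :
    s.inf' hs f ≤ s.inf' hs g + M := by
  obtain ⟨a, ha, hEq⟩ := Finset.exists_mem_eq_inf' hs g
  calc s.inf' hs f ≤ f a := Finset.inf'_le f ha
    _ ≤ g a + M := h a ha
    _ = s.inf' hs g + M := by rw [hEq]

/-- inf over a product of the sum equals the sum of infs. -/
lemma my_inf'_pi_sum {ι : Type*} [Fintype ι] [DecidableEq ι] [Nonempty ι] (A : ι → Type*)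
    [∀ i, Fintype (A i)] [∀ i, Nonempty (A i)] (f : ∀ i, A i → ℝ) :
    (Finset.univ : Finset (∀ i, A i)).inf' Finset.univ_nonempty
        (fun a => ∑ i, f i (a i))
      = ∑ i, (Finset.univ : Finset (A i)).inf' Finset.univ_nonempty (f i) := by
  apply le_antisymm
  · have h : ∀ i, ∃ b ∈ (Finset.univ : Finset (A i)),
        (Finset.univ : Finset (A i)).inf' Finset.univ_nonempty (f i) = f i b :=
      fun i => Finset.exists_mem_eq_inf' _ (f i)
    choose b _ hb using h
    calc (Finset.univ : Finset (∀ i, A i)).inf' Finset.univ_nonempty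
          (fun a => ∑ i, f i (a i)) ≤ ∑ i, f i (b i) :=
        Finset.inf'_le _ (Finset.mem_univ b)
      _ = _ := by simp_rw [hb]
  · apply Finset.le_inf'
    intro a _
    exact Finset.sum_le_sum fun i _ =>
      Finset.inf'_le (f i) (Finset.mem_univ (a i))

/-- The optimal value function of a product MDP (the unique fixed point of its
Bellman optimality operator) is the sum of the optimal value functions of the
sub-MDPs (the unique fixed points of the local Bellman optimality operators). -/
theorem product_optimal_value_eq_sum
    {ι : Type*} [Fintype ι] [DecidableEq ι] [Nonempty ι]
    (S A : ι → Type*)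
    [∀ i, Fintype (S i)] [∀ i, Nonempty (S i)]
    [∀ i, Fintype (A i)] [∀ i, Nonempty (A i)]
    (P : ∀ i, S i → A i → S i → ℝ)
    (hP0 : ∀ i, ∀ (x : S i) (b : A i) (y : S i), 0 ≤ P i x b y)
    (hP1 : ∀ i, ∀ (x : S i) (b : A i), ∑ y : S i, P i x b y = 1)
    (J : ∀ i, S i → A i → ℝ)
    (γ : ℝ) (hγ0 : 0 ≤ γ) (hγ1 : γ < 1)
    -- `Vistar i` is the (unique) fixed point of the `i`-th local Bellman
    -- optimality operator:
    (Vistar : ∀ i, S i → ℝ)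
    (hVistar : ∀ i, ∀ x : S i,
      Vistar i x = Finset.univ.inf' Finset.univ_nonempty
        (fun b : A i => J i x b + γ * ∑ y : S i, P i x b y * Vistar i y))
    -- `Vstar` is the (unique) fixed point of the Bellman optimality operator
    -- of the product MDP:
    (Vstar : (∀ i, S i) → ℝ)
    (hVstar : ∀ s : ∀ i, S i,
      Vstar s = Finset.univ.inf' Finset.univ_nonempty
        (fun a : ∀ i, A i =>
          (∑ i, J i (s i) (a i)) +
            γ * ∑ s' : ∀ i, S i, (∏ i, P i (s i) (a i) (s' i)) * Vstar s')) :
    ∀ s : ∀ i, S i, Vstar s = ∑ i, Vistar i (s i) := by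
  set W : (∀ i, S i) → ℝ := fun s => ∑ i, Vistar i (s i) with hW
  -- key: factorization of expected value of W under product transitions
  have key : ∀ (s : ∀ i, S i) (a : ∀ i, A i) (j : ι),
      ∑ s' : ∀ i, S i, (∏ i, P i (s i) (a i) (s' i)) * Vistar j (s' j)
        = ∑ y : S j, P j (s j) (a j) y * Vistar j y := by
    intro s a j
    have h1 : ∀ s' : ∀ i, S i,
        (∏ i, P i (s i) (a i) (s' i)) * Vistar j (s' j)
          = ∏ i, (P i (s i) (a i) (s' i) *
              (if i = j then Vistar i (s' i) else 1)) := by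
      intro s'
      rw [Finset.prod_mul_distrib]
      congr 1
      simp
    simp_rw [h1]
    rw [← Fintype.prod_sum (fun i y => P i (s i) (a i) y *
        (if i = j then Vistar i y else 1))]
    have h2 : ∀ i, (∑ y : S i, P i (s i) (a i) y *
        (if i = j then Vistar i y else 1))
          = if i = j then (∑ y : S i, P i (s i) (a i) y * Vistar i y) else 1 := by
      intro i
      by_cases hij : i = j <;> simp [hij, hP1]
    simp_rw [h2]
    rw [Finset.prod_ite_eq' Finset.univ j
      (fun i => ∑ y : S i, P i (s i) (a i) y * Vistar i y)]
    simp
  -- W satisfies the product Bellman equation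
  have hWBell : ∀ s : ∀ i, S i,
      W s = Finset.univ.inf' Finset.univ_nonempty
        (fun a : ∀ i, A i =>
          (∑ i, J i (s i) (a i)) +
            γ * ∑ s' : ∀ i, S i, (∏ i, P i (s i) (a i) (s' i)) * W s') := by
    intro s
    have : W s = (Finset.univ : Finset (∀ i, A i)).inf' Finset.univ_nonempty
        (fun a => ∑ i, (J i (s i) (a i) +
          γ * ∑ y : S i, P i (s i) (a i) y * Vistar i y)) := by
      rw [my_inf'_pi_sum A (fun i b => J i (s i) b +
        γ * ∑ y : S i, P i (s i) b y * Vistar i y)]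
      simp_rw [hW, ← hVistar]
    rw [this]
    congr 1
    funext a
    rw [Finset.sum_add_distrib, ← Finset.mul_sum]
    congr 2
    simp only [hW]
    calc ∑ i, ∑ y, P i (s i) (a i) y * Vistar i y
        = ∑ i, ∑ s' : ∀ i, S i, (∏ k, P k (s k) (a k) (s' k)) * Vistar i (s' i) :=
          Finset.sum_congr rfl fun j _ => (key s a j).symm
      _ = ∑ s' : ∀ i, S i, ∑ i, (∏ k, P k (s k) (a k) (s' k)) * Vistar i (s' i) :=
          Finset.sum_comm
      _ = ∑ s' : ∀ i, S i, (∏ k, P k (s k) (a k) (s' k)) * ∑ i, Vistar i (s' i) := by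
          simp_rw [Finset.mul_sum]
  -- contraction argument: Vstar = W
  set M : ℝ := Finset.univ.sup' Finset.univ_nonempty
      (fun s : ∀ i, S i => |Vstar s - W s|) with hM
  have hMle : ∀ s : ∀ i, S i, |Vstar s - W s| ≤ M := by
    intro s; rw [hM]
    exact Finset.le_sup' (fun s : ∀ i, S i => |Vstar s - W s|) (Finset.mem_univ s)
  have hstep : ∀ s : ∀ i, S i, |Vstar s - W s| ≤ γ * M := by
    intro s
    rw [abs_le]
    have hbound : ∀ (V1 V2 : (∀ i, S i) → ℝ),
        (∀ s', V1 s' - V2 s' ≤ M) →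
        ∀ a : ∀ i, A i,
        ((∑ i, J i (s i) (a i)) +
            γ * ∑ s' : ∀ i, S i, (∏ i, P i (s i) (a i) (s' i)) * V1 s')
          ≤ ((∑ i, J i (s i) (a i)) +
            γ * ∑ s' : ∀ i, S i, (∏ i, P i (s i) (a i) (s' i)) * V2 s') + γ * M := by
      intro V1 V2 hV a
      have hPnn : ∀ s' : ∀ i, S i, 0 ≤ ∏ i, P i (s i) (a i) (s' i) :=
        fun s' => Finset.prod_nonneg fun i _ => hP0 i _ _ _
      have hPsum : ∑ s' : ∀ i, S i, (∏ i, P i (s i) (a i) (s' i)) = 1 := by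
        rw [← Fintype.prod_sum (fun i y => P i (s i) (a i) y)]
        simp [hP1]
      have : ∑ s' : ∀ i, S i, (∏ i, P i (s i) (a i) (s' i)) * V1 s'
          ≤ (∑ s' : ∀ i, S i, (∏ i, P i (s i) (a i) (s' i)) * V2 s') + M := by
        have := Finset.sum_le_sum (s := (Finset.univ : Finset (∀ i, S i)))
          (f := fun s' => (∏ i, P i (s i) (a i) (s' i)) * V1 s')
          (g := fun s' => (∏ i, P i (s i) (a i) (s' i)) * (V2 s' + M))
          (fun s' _ => by
            apply mul_le_mul_of_nonneg_left _ (hPnn s')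
            linarith [hV s'])
        calc ∑ s' : ∀ i, S i, (∏ i, P i (s i) (a i) (s' i)) * V1 s'
            ≤ ∑ s' : ∀ i, S i, (∏ i, P i (s i) (a i) (s' i)) * (V2 s' + M) := this
          _ = (∑ s' : ∀ i, S i, (∏ i, P i (s i) (a i) (s' i)) * V2 s') + M := by
              simp_rw [mul_add, Finset.sum_add_distrib, ← Finset.sum_mul, hPsum,
                one_mul]
      nlinarith [this]
    constructor
    · have h2 : ∀ s', W s' - Vstar s' ≤ M := by
        intro s'; have := hMle s'; rw [abs_sub_comm] at this
        linarith [le_abs_self (W s' - Vstar s')]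
      rw [hVstar s, hWBell s]
      have := my_inf'_le_inf'_add (Finset.univ : Finset (∀ i, A i))
        Finset.univ_nonempty _ _ (γ * M)
        (fun a _ => hbound W Vstar h2 a)
      linarith [this]
    · have h2 : ∀ s', Vstar s' - W s' ≤ M := fun s' =>
        le_trans (le_abs_self _) (hMle s')
      rw [hVstar s, hWBell s]
      have := my_inf'_le_inf'_add (Finset.univ : Finset (∀ i, A i))
        Finset.univ_nonempty _ _ (γ * M)
        (fun a _ => hbound Vstar W h2 a)
      linarith [this]
  have hM0 : 0 ≤ M := le_trans (abs_nonneg _) (hMle Classical.ofNonempty)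
  have hMγ : M ≤ γ * M := by
    rw [hM]
    apply Finset.sup'_le
    intro s _
    exact hstep s
  have hMzero : M = 0 := by nlinarith
  intro s
  have := hMle s
  rw [hMzero] at this
  have := abs_nonpos_iff.mp (le_of_le_of_eq this rfl)
  linarith [sub_eq_zero.mp this]
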